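/- Let r be an integer and m, d positive integers with gcd(m,d) = 1. Let λ be the unique integer in {0,1,…,d-1} with r + λm ≡ 0 (mod d). Then (q^r; q^m)_d / (1 - q^d) ≡ r + λm modulo Φ_d(q). -/

import Mathlib

open Polynomial Finset

-- ∏_{t=1}^{d-1} (1 - ζ^t) = d for a primitive d-th root of unity ζ.
lemma aux_prod_one_sub (d : ℕ) (hd : 0 < d) {ζ : ℂ} (hz : IsPrimitiveRoot ζ d) :
    ∏ t ∈ (Finset.range d).erase 0, (1 - ζ ^ t) = d := by
  obtain ⟨n, rfl⟩ : ∃ n, d = n + 1 := ⟨d - 1, by omega⟩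
  have h := hz.prod_one_sub_pow_eq_order
  calc ∏ t ∈ (Finset.range (n+1)).erase 0, (1 - ζ ^ t)
      = ∏ k ∈ Finset.range n, (1 - ζ ^ (k+1)) := by
        refine Finset.prod_nbij' (fun t => t - 1) (fun k => k + 1) ?_ ?_ ?_ ?_ ?_
        · intro a ha; simp only [Finset.mem_erase, Finset.mem_range] at ha
          simp only [Finset.mem_range]; omega
        · intro a ha; simp only [Finset.mem_range] at ha
          simp only [Finset.mem_erase, Finset.mem_range]; omega
        · intro a ha; simp only [Finset.mem_erase, Finset.mem_range] at ha
          show a - 1 + 1 = a; omega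
        · intro a ha; simp only [Finset.mem_range] at ha
          show a + 1 - 1 = a; omega
        · intro a ha; simp only [Finset.mem_erase, Finset.mem_range] at ha
          rw [Nat.sub_add_cancel (by omega)]
      _ = ((n : ℂ) + 1) := h
      _ = ((n + 1 : ℕ) : ℂ) := by norm_num

-- the key identity: the product over j ≠ lam of (1 - ζ^(r+jm)) equals d.
lemma aux_key (r : ℤ) (m d : ℕ) (hd : 0 < d) (hcop : Nat.Coprime m d) (lam : ℕ)
    (hlam : lam < d) (hdvd : (d : ℤ) ∣ r + lam * m) {ζ : ℂ} (hz : IsPrimitiveRoot ζ d) :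
    ∏ j ∈ (Finset.range d).erase lam, (1 - ζ ^ (r + (j : ℤ) * m)) = d := by
  have hd' : (0 : ℤ) < d := by exact_mod_cast hd
  have hζd : ζ ^ d = 1 := hz.pow_eq_one
  have hζ0 : ζ ≠ 0 := by
    intro h; rw [h, zero_pow hd.ne'] at hζd; exact zero_ne_one hζd
  have hcop' : IsCoprime (d : ℤ) (m : ℤ) :=
    (Nat.isCoprime_iff_coprime.mpr hcop).symm
  have cancel : ∀ i j : ℕ, i < d → j < d → (d : ℤ) ∣ ((i : ℤ) - j) * m → i = j := by
    intro i j hi hj hdd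
    have h2 : (d : ℤ) ∣ ((i : ℤ) - j) := hcop'.dvd_of_dvd_mul_right hdd
    obtain ⟨t, ht⟩ := h2
    have hb1 : (i : ℤ) - j < d := by omega
    have hb2 : -(d : ℤ) < (i : ℤ) - j := by omega
    rcases lt_trichotomy t 0 with h | h | h
    · exfalso; nlinarith
    · subst h; omega
    · exfalso; nlinarith
  have uniq : ∀ j : ℕ, j < d → (d : ℤ) ∣ r + j * m → j = lam := by
    intro j hj hj2
    refine cancel j lam hj hlam ?_
    have := dvd_sub hj2 hdvd
    have e : (r + j * m) - (r + lam * m) = ((j : ℤ) - lam) * m := by ring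
    rwa [e] at this
  set e : ℕ → ℕ := fun j => ((r + j * m) % d).toNat with he_def
  have hemod : ∀ j : ℕ, ((e j : ℤ)) = (r + j * m) % d := fun j =>
    Int.toNat_of_nonneg (Int.emod_nonneg _ (by exact_mod_cast hd.ne'))
  have helt : ∀ j : ℕ, e j < d := by
    intro j
    have h1 := hemod j
    have h2 := Int.emod_lt_of_pos (r + j * m) hd'
    omega
  have dvd_diff : ∀ j : ℕ, (d : ℤ) ∣ (r + j * m) - e j := by
    intro j
    rw [hemod]
    exact Int.dvd_self_sub_of_emod_eq rfl
  have hzE : ∀ j : ℕ, ζ ^ (r + (j : ℤ) * m) = ζ ^ (e j) := by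
    intro j
    obtain ⟨t, ht⟩ := dvd_diff j
    have h : r + (j : ℤ) * m = (e j : ℤ) + d * t := by linarith
    rw [h, zpow_add₀ hζ0, zpow_natCast]
    have h2 : ζ ^ ((d : ℤ) * t) = 1 := by
      rw [zpow_mul, zpow_natCast, hζd, one_zpow]
    rw [h2, mul_one]
  have hmapsto : ∀ a ∈ (Finset.range d).erase lam, e a ∈ (Finset.range d).erase 0 := by
    intro a ha
    simp only [Finset.mem_erase, Finset.mem_range] at ha ⊢
    refine ⟨?_, helt a⟩
    intro h0
    have h1 := hemod a
    rw [h0] at h1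
    have h2 : (d : ℤ) ∣ r + a * m := Int.dvd_of_emod_eq_zero (by omega)
    exact ha.1 (uniq a ha.2 h2)
  have hinj : Set.InjOn e ((Finset.range d).erase lam : Finset ℕ) := by
    intro i hi j hj hij
    simp only [Finset.coe_erase, Set.mem_diff, Finset.mem_coe, Finset.mem_range] at hi hj
    refine cancel i j hi.1 hj.1 ?_
    have h1 := dvd_diff i
    have h2 := dvd_diff j
    have h3 : (d : ℤ) ∣ ((r + i * m) - e i) - ((r + j * m) - e j) := dvd_sub h1 h2
    have h4 : ((r + i * m) - (e i : ℤ)) - ((r + j * m) - e j) = ((i : ℤ) - j) * m := by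
      rw [hij]; push_cast; ring
    rwa [h4] at h3
  have hsurj : Set.SurjOn e ((Finset.range d).erase lam : Finset ℕ)
      ((Finset.range d).erase 0 : Finset ℕ) := by
    have hcard : ((Finset.range d).erase 0).card ≤ ((Finset.range d).erase lam).card := by
      rw [Finset.card_erase_of_mem (Finset.mem_range.mpr hlam),
        Finset.card_erase_of_mem (Finset.mem_range.mpr hd)]
    have hs := Finset.surj_on_of_inj_on_of_card_le (s := (Finset.range d).erase lam)
      (t := (Finset.range d).erase 0) (fun a _ => e a) (fun a ha => hmapsto a ha)
      (fun a₁ a₂ ha₁ ha₂ hh => hinj (Finset.mem_coe.mpr ha₁) (Finset.mem_coe.mpr ha₂) hh)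
      hcard
    intro b hb
    obtain ⟨a, ha, hab⟩ := hs b (Finset.mem_coe.mp hb)
    exact ⟨a, Finset.mem_coe.mpr ha, hab.symm⟩
  calc ∏ j ∈ (Finset.range d).erase lam, (1 - ζ ^ (r + (j : ℤ) * m))
      = ∏ t ∈ (Finset.range d).erase 0, (1 - ζ ^ t) :=
        Finset.prod_nbij e hmapsto hinj hsurj (fun a _ => by rw [hzE])
    _ = d := aux_prod_one_sub d hd hz

theorem qPoch_div_congr_cyclotomic (r : ℤ) (m d : ℕ) (hm : 0 < m) (hd : 0 < d)
    (hcop : Nat.Coprime m d) (lam : ℕ) (hlam : lam < d)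
    (hdvd : (d : ℤ) ∣ r + lam * m) :
    ∃ a b : Polynomial ℚ, ¬ Polynomial.cyclotomic d ℚ ∣ b ∧
      ((∏ j ∈ Finset.range d, (1 - (RatFunc.X : RatFunc ℚ) ^ (r + (j : ℤ) * m)))
          / (1 - (RatFunc.X : RatFunc ℚ) ^ (d : ℤ))
        - ((r + lam * m : ℤ) : RatFunc ℚ))
          * algebraMap (Polynomial ℚ) (RatFunc ℚ) b
        = algebraMap (Polynomial ℚ) (RatFunc ℚ) (Polynomial.cyclotomic d ℚ * a) := by
  have hΦirr : Irreducible (cyclotomic d ℚ) := cyclotomic.irreducible_rat hd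
  set c : ℤ := r + lam * m with hc
  obtain ⟨k, hk⟩ := id hdvd
  by_cases hc0 : c = 0
  · refine ⟨0, 1, fun h => hΦirr.not_isUnit (isUnit_of_dvd_one h), ?_⟩
    have hzero : (∏ j ∈ Finset.range d,
        (1 - (RatFunc.X : RatFunc ℚ) ^ (r + (j : ℤ) * m))) = 0 := by
      apply Finset.prod_eq_zero (Finset.mem_range.mpr hlam)
      rw [show r + (lam : ℤ) * m = 0 from hc0]
      simp
    rw [hzero, show ((c : ℤ) : RatFunc ℚ) = 0 by exact_mod_cast congrArg (fun x : ℤ => (x : RatFunc ℚ)) hc0]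
    simp
  · -- main case
    have hk0 : k ≠ 0 := fun h => hc0 (by rw [hk, h, mul_zero])
    obtain ⟨ζ, hz⟩ : ∃ ζ : ℂ, IsPrimitiveRoot ζ d :=
      ⟨_, Complex.isPrimitiveRoot_exp d hd.ne'⟩
    have hζd : ζ ^ d = 1 := hz.pow_eq_one
    have hζ0 : ζ ≠ 0 := fun h => by
      rw [h, zero_pow hd.ne'] at hζd; exact zero_ne_one hζd
    set M : ℕ := r.natAbs with hM
    set K : ℕ := k.natAbs with hK
    set ε : ℤ := if 0 < k then 1 else -1 with hε
    set t : ℕ := if 0 < k then 0 else d * K with ht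
    set s : ℕ := M * (d - 1) + t with hs
    have hεK : ε * K = k := by rw [hε, hK]; split_ifs <;> omega
    set gs : ℚ[X] := ∑ i ∈ Finset.range K, (X ^ d) ^ i with hgs_def
    set e' : ℕ → ℕ := fun j => ((M : ℤ) + r + j * m).toNat with he'_def
    have he' : ∀ j : ℕ, ((e' j : ℕ) : ℤ) = (M : ℤ) + r + j * m := by
      intro j
      have h1 : (0 : ℤ) ≤ (j : ℤ) * m := by positivity
      have h2 : (0 : ℤ) ≤ (M : ℤ) + r + j * m := by rw [hM]; omega
      exact Int.toNat_of_nonneg h2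
    set p : ℕ → ℚ[X] := fun j => X ^ M - X ^ (e' j) with hp_def
    set P : ℚ[X] := ∏ j ∈ (Finset.range d).erase lam, p j with hP_def
    set n₁ : ℚ[X] := (ε : ℚ[X]) * P * gs - (c : ℚ[X]) * X ^ s with hn₁
    have hX0 : (RatFunc.X : RatFunc ℚ) ≠ 0 := RatFunc.X_ne_zero
    have hdenpoly : ((1 : ℚ[X]) - X ^ d) ≠ 0 := by
      intro h
      have h2 := congrArg (eval 0) h
      simp [zero_pow hd.ne'] at h2
    have hmapden : (1 - (RatFunc.X : RatFunc ℚ) ^ (d : ℤ))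
        = algebraMap (ℚ[X]) (RatFunc ℚ) (1 - X ^ d) := by
      rw [map_sub, map_one, map_pow, RatFunc.algebraMap_X, zpow_natCast]
    have hden : (1 - (RatFunc.X : RatFunc ℚ) ^ (d : ℤ)) ≠ 0 := by
      rw [hmapden]; exact RatFunc.algebraMap_ne_zero hdenpoly
    have hgs : ((1 : ℚ[X]) - X ^ d) * gs = 1 - (X ^ d) ^ K := by
      have h := geom_sum_mul (X ^ d : ℚ[X]) K
      rw [hgs_def]
      linear_combination -h
    have hcard : ((Finset.range d).erase lam).card = d - 1 := by
      rw [Finset.card_erase_of_mem (Finset.mem_range.mpr hlam), Finset.card_range]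
    -- Lemma A
    have hA : (1 - (RatFunc.X : RatFunc ℚ) ^ (c : ℤ)) * RatFunc.X ^ t
        = (1 - (RatFunc.X : RatFunc ℚ) ^ (d : ℤ))
          * algebraMap (ℚ[X]) (RatFunc ℚ) ((ε : ℚ[X]) * gs) := by
      by_cases hkpos : 0 < k
      · have ht0 : t = 0 := by rw [ht, if_pos hkpos]
        have hε1 : ε = 1 := by rw [hε, if_pos hkpos]
        have hkK : (K : ℤ) = k := by rw [hK]; omega
        have hcK : c = ((d * K : ℕ) : ℤ) := by push_cast; rw [hkK, hk]
        calc (1 - (RatFunc.X : RatFunc ℚ) ^ (c : ℤ)) * RatFunc.X ^ t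
            = 1 - (RatFunc.X : RatFunc ℚ) ^ (d * K : ℕ) := by
              rw [ht0, pow_zero, mul_one, hcK, zpow_natCast]
          _ = algebraMap (ℚ[X]) (RatFunc ℚ) (1 - (X ^ d) ^ K) := by
              rw [map_sub, map_one, map_pow, map_pow, RatFunc.algebraMap_X, ← pow_mul]
          _ = algebraMap (ℚ[X]) (RatFunc ℚ) (((1 : ℚ[X]) - X ^ d) * gs) := by rw [hgs]
          _ = (1 - (RatFunc.X : RatFunc ℚ) ^ (d : ℤ))
              * algebraMap (ℚ[X]) (RatFunc ℚ) ((ε : ℚ[X]) * gs) := by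
              rw [map_mul, hmapden, hε1]; push_cast; rw [one_mul]
      · have hkneg : k < 0 := by omega
        have htK : t = d * K := by rw [ht, if_neg hkpos]
        have hεn : ε = -1 := by rw [hε, if_neg hkpos]
        have hkK : (K : ℤ) = -k := by rw [hK]; omega
        have hcK : c + ((d * K : ℕ) : ℤ) = 0 := by push_cast; rw [hkK, hk]; ring
        calc (1 - (RatFunc.X : RatFunc ℚ) ^ (c : ℤ)) * RatFunc.X ^ t
            = RatFunc.X ^ ((d * K : ℕ) : ℤ)
              - RatFunc.X ^ ((c : ℤ) + ((d * K : ℕ) : ℤ)) := by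
              rw [htK, sub_mul, one_mul, ← zpow_natCast (RatFunc.X : RatFunc ℚ) (d * K),
                ← zpow_add₀ hX0]
          _ = RatFunc.X ^ (d * K : ℕ) - 1 := by rw [hcK, zpow_zero, zpow_natCast]
          _ = algebraMap (ℚ[X]) (RatFunc ℚ) (-(1 - (X ^ d) ^ K)) := by
              rw [map_neg, map_sub, map_one, map_pow, map_pow, RatFunc.algebraMap_X,
                ← pow_mul, neg_sub]
          _ = algebraMap (ℚ[X]) (RatFunc ℚ) (((1 : ℚ[X]) - X ^ d) * (-gs)) := by
              rw [mul_neg, hgs]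
          _ = (1 - (RatFunc.X : RatFunc ℚ) ^ (d : ℤ))
              * algebraMap (ℚ[X]) (RatFunc ℚ) ((ε : ℚ[X]) * gs) := by
              rw [map_mul, hmapden, hεn]; push_cast; ring
    -- Lemma B
    have hB : (∏ j ∈ (Finset.range d).erase lam,
          (1 - (RatFunc.X : RatFunc ℚ) ^ (r + (j : ℤ) * m))) * RatFunc.X ^ (M * (d - 1))
        = algebraMap (ℚ[X]) (RatFunc ℚ) P := by
      have hXpow : (RatFunc.X : RatFunc ℚ) ^ (M * (d - 1))
          = ∏ _j ∈ (Finset.range d).erase lam, (RatFunc.X : RatFunc ℚ) ^ M := by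
        rw [Finset.prod_const, hcard, ← pow_mul]
      rw [hXpow, ← Finset.prod_mul_distrib, hP_def, map_prod]
      refine Finset.prod_congr rfl fun j hj => ?_
      have hmp : algebraMap (ℚ[X]) (RatFunc ℚ) (p j)
          = (RatFunc.X : RatFunc ℚ) ^ M - RatFunc.X ^ (e' j) := by
        rw [hp_def]; simp only [map_sub, map_pow, RatFunc.algebraMap_X]
      rw [hmp, sub_mul, one_mul]
      congr 1
      rw [← zpow_natCast (RatFunc.X : RatFunc ℚ) M, ← zpow_add₀ hX0,
        ← zpow_natCast (RatFunc.X : RatFunc ℚ) (e' j), he']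
      congr 1
      ring
    -- the key RatFunc computation
    have key : (∏ j ∈ Finset.range d, (1 - (RatFunc.X : RatFunc ℚ) ^ (r + (j : ℤ) * m)))
          / (1 - (RatFunc.X : RatFunc ℚ) ^ (d : ℤ)) * RatFunc.X ^ s
        = algebraMap (ℚ[X]) (RatFunc ℚ) ((ε : ℚ[X]) * P * gs) := by
      have hsplit : (∏ j ∈ Finset.range d, (1 - (RatFunc.X : RatFunc ℚ) ^ (r + (j : ℤ) * m)))
          = (1 - (RatFunc.X : RatFunc ℚ) ^ (c : ℤ)) * ∏ j ∈ (Finset.range d).erase lam,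
            (1 - (RatFunc.X : RatFunc ℚ) ^ (r + (j : ℤ) * m)) := by
        rw [← Finset.mul_prod_erase _ _ (Finset.mem_range.mpr hlam)]
      rw [hsplit, hs, pow_add]
      calc (1 - (RatFunc.X : RatFunc ℚ) ^ (c : ℤ)) * (∏ j ∈ (Finset.range d).erase lam,
            (1 - (RatFunc.X : RatFunc ℚ) ^ (r + (j : ℤ) * m)))
            / (1 - (RatFunc.X : RatFunc ℚ) ^ (d : ℤ))
            * ((RatFunc.X : RatFunc ℚ) ^ (M * (d - 1)) * RatFunc.X ^ t)
          = ((∏ j ∈ (Finset.range d).erase lam,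
              (1 - (RatFunc.X : RatFunc ℚ) ^ (r + (j : ℤ) * m)))
              * (RatFunc.X : RatFunc ℚ) ^ (M * (d - 1)))
            * ((1 - (RatFunc.X : RatFunc ℚ) ^ (c : ℤ)) * RatFunc.X ^ t)
            / (1 - (RatFunc.X : RatFunc ℚ) ^ (d : ℤ)) := by ring
        _ = (algebraMap (ℚ[X]) (RatFunc ℚ) P)
            * ((1 - (RatFunc.X : RatFunc ℚ) ^ (d : ℤ))
              * algebraMap (ℚ[X]) (RatFunc ℚ) ((ε : ℚ[X]) * gs))
            / (1 - (RatFunc.X : RatFunc ℚ) ^ (d : ℤ)) := by rw [hA, hB]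
        _ = (algebraMap (ℚ[X]) (RatFunc ℚ) P)
            * algebraMap (ℚ[X]) (RatFunc ℚ) ((ε : ℚ[X]) * gs) := by
            rw [mul_comm (1 - (RatFunc.X : RatFunc ℚ) ^ (d : ℤ)) _, ← mul_assoc,
              mul_div_assoc, div_self hden, mul_one]
        _ = algebraMap (ℚ[X]) (RatFunc ℚ) ((ε : ℚ[X]) * P * gs) := by
            rw [← map_mul]; congr 1; ring
    -- aeval n₁ at ζ is 0
    have hPe : (Polynomial.aeval ζ) P = ζ ^ (M * (d - 1)) * d := by
      calc (Polynomial.aeval ζ) P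
          = ∏ j ∈ (Finset.range d).erase lam, (ζ ^ M - ζ ^ (e' j)) := by
            rw [hP_def, map_prod]
            exact Finset.prod_congr rfl fun j _ => by rw [hp_def]; simp
        _ = ∏ j ∈ (Finset.range d).erase lam, (ζ ^ M * (1 - ζ ^ (r + (j : ℤ) * m))) := by
            refine Finset.prod_congr rfl fun j _ => ?_
            have hej : (ζ : ℂ) ^ (e' j) = ζ ^ M * ζ ^ (r + (j : ℤ) * m) := by
              rw [← zpow_natCast ζ (e' j), he',
                show (M : ℤ) + r + (j : ℤ) * m = (M : ℤ) + (r + (j : ℤ) * m) from by ring,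
                zpow_add₀ hζ0, zpow_natCast]
            rw [hej]; ring
        _ = (ζ ^ M) ^ (d - 1) * ∏ j ∈ (Finset.range d).erase lam,
              (1 - ζ ^ (r + (j : ℤ) * m)) := by
            rw [Finset.prod_mul_distrib, Finset.prod_const, hcard]
        _ = ζ ^ (M * (d - 1)) * d := by
            rw [aux_key r m d hd hcop lam hlam hdvd hz, ← pow_mul]
    have hgsv : (Polynomial.aeval ζ) gs = K := by
      rw [hgs_def]
      simp [hζd]
    have hζt : (ζ : ℂ) ^ t = 1 := by
      rw [ht]
      split_ifs
      · rw [pow_zero]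
      · rw [pow_mul, hζd, one_pow]
    have haev : (Polynomial.aeval ζ) n₁ = 0 := by
      have hev : (Polynomial.aeval ζ) n₁
          = (ε : ℂ) * (ζ ^ (M * (d - 1)) * d) * K
            - (c : ℂ) * (ζ ^ (M * (d - 1)) * ζ ^ t) := by
        simp only [hn₁, map_sub, map_mul, map_pow, map_intCast, Polynomial.aeval_X,
          hPe, hgsv, hs, pow_add]
        try push_cast
        try ring
      rw [hev, hζt, mul_one]
      have hcεK : (c : ℂ) = (ε : ℂ) * d * K := by
        have : c = ε * d * K := by rw [hk, ← hεK]; ring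
        rw [this]; push_cast; ring
      rw [hcεK]; ring
    have hΦn : cyclotomic d ℚ ∣ n₁ := by
      rw [cyclotomic_eq_minpoly_rat hz hd]
      exact minpoly.dvd ℚ ζ haev
    obtain ⟨a, ha⟩ := hΦn
    have hb : ¬ cyclotomic d ℚ ∣ (X ^ s : ℚ[X]) := by
      intro hdd
      rcases Nat.eq_zero_or_pos s with h0 | hs0
      · rw [h0, pow_zero] at hdd
        exact hΦirr.not_isUnit (isUnit_of_dvd_one hdd)
      · have hdx := hΦirr.prime.dvd_of_dvd_pow hdd
        obtain ⟨u, hu⟩ := hdx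
        have hroot : ¬ (cyclotomic d ℚ).IsRoot 0 := by
          haveI : NeZero ((d : ℚ)) := ⟨by exact_mod_cast hd.ne'⟩
          rw [Polynomial.isRoot_cyclotomic_iff]
          intro hpr
          have h1 := hpr.pow_eq_one
          rw [zero_pow hd.ne'] at h1
          exact zero_ne_one h1
        have h0 : eval 0 (X : ℚ[X]) = 0 := by simp
        rw [hu, eval_mul] at h0
        rcases mul_eq_zero.mp h0 with h | h
        · exact hroot h
        · have hXu : (X : ℚ[X]) ∣ u := by
            have := (Polynomial.dvd_iff_isRoot (p := u) (a := 0)).mpr h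
            simpa using this
          obtain ⟨v, hv⟩ := hXu
          rw [hv] at hu
          have h1 : (1 : ℚ[X]) = cyclotomic d ℚ * v := by
            apply mul_left_cancel₀ (Polynomial.X_ne_zero (R := ℚ))
            rw [mul_one]
            linear_combination hu
          exact hΦirr.not_isUnit (isUnit_of_dvd_one ⟨v, h1⟩)
    have hcs : ((c : ℤ) : RatFunc ℚ) * RatFunc.X ^ s
        = algebraMap (ℚ[X]) (RatFunc ℚ) ((c : ℚ[X]) * X ^ s) := by
      rw [map_mul, map_pow, RatFunc.algebraMap_X, map_intCast]
    refine ⟨a, X ^ s, hb, ?_⟩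
    rw [← ha, sub_mul, map_pow, RatFunc.algebraMap_X, key, hcs, ← map_sub, hn₁]
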